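/- Let φ be a C² function on a domain Ω ⊂ R², x ∈ Ω with Dφ(x) ≠ 0. Then φ(x) - med_{s ∈ ∂B_ε(x)} φ(s) = -(ε²/2)Δ_1φ(x) + o(ε²) as ε → 0, where Δ_1φ = |Dφ| div(Dφ/|Dφ|) is the 1-Laplacian. -/

import Mathlib

set_option maxHeartbeats 2000000

open MeasureTheory Real Filter Asymptotics Metric Set Topology

/-- Partial derivative ∂u/∂x_i. -/
noncomputable def pd {N : ℕ} (u : EuclideanSpace ℝ (Fin N) → ℝ) (i : Fin N)
    (x : EuclideanSpace ℝ (Fin N)) : ℝ :=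
  fderiv ℝ u x (EuclideanSpace.single i 1)

/-- Second partial derivative ∂²u/∂x_i∂x_j. -/
noncomputable def pd2 {N : ℕ} (u : EuclideanSpace ℝ (Fin N) → ℝ) (i j : Fin N)
    (x : EuclideanSpace ℝ (Fin N)) : ℝ :=
  pd (pd u j) i x

/-- The norm of the gradient |Du(x)|. -/
noncomputable def gradNorm {N : ℕ} (u : EuclideanSpace ℝ (Fin N) → ℝ)
    (x : EuclideanSpace ℝ (Fin N)) : ℝ :=
  Real.sqrt (∑ i, (pd u i x) ^ 2)

/-- The Laplacian Δu. -/
noncomputable def lap {N : ℕ} (u : EuclideanSpace ℝ (Fin N) → ℝ)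
    (x : EuclideanSpace ℝ (Fin N)) : ℝ :=
  ∑ i, pd2 u i i x

/-- The infinity-Laplacian Δ_∞ u = |Du|⁻² Σ ∂_i u ∂_j u ∂_ij u. -/
noncomputable def infLap {N : ℕ} (u : EuclideanSpace ℝ (Fin N) → ℝ)
    (x : EuclideanSpace ℝ (Fin N)) : ℝ :=
  (∑ i, ∑ j, pd u i x * pd u j x * pd2 u i j x) / (gradNorm u x) ^ 2

/-- The p-Laplacian Δ_p u = div(|Du|^{p-2} Du). -/
noncomputable def pLap {N : ℕ} (p : ℝ) (u : EuclideanSpace ℝ (Fin N) → ℝ)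
    (x : EuclideanSpace ℝ (Fin N)) : ℝ :=
  ∑ i, pd (fun y => gradNorm u y ^ (p - 2) * pd u i y) i x

/-- The 1-Laplacian Δ_1 u = |Du| div(Du/|Du|). -/
noncomputable def oneLap {N : ℕ} (u : EuclideanSpace ℝ (Fin N) → ℝ)
    (x : EuclideanSpace ℝ (Fin N)) : ℝ :=
  gradNorm u x * ∑ i, pd (fun y => pd u i y / gradNorm u y) i x

/-- The point x + ε(cos θ, sin θ) on the circle ∂B_ε(x). -/
noncomputable def circlePt (x : EuclideanSpace ℝ (Fin 2)) (ε θ : ℝ) :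
    EuclideanSpace ℝ (Fin 2) :=
  x + ε • (EuclideanSpace.single 0 (Real.cos θ) + EuclideanSpace.single 1 (Real.sin θ))

/-- The average of u over the circle ∂B_ε(x). -/
noncomputable def circleAvg (u : EuclideanSpace ℝ (Fin 2) → ℝ)
    (x : EuclideanSpace ℝ (Fin 2)) (ε : ℝ) : ℝ :=
  (2 * Real.pi)⁻¹ * ∫ θ in (0:ℝ)..(2 * Real.pi), u (circlePt x ε θ)

/-- m is a median of u over the circle ∂B_ε(x): the arc-length measures of the
sets where u ≥ m and u ≤ m coincide. -/
def IsCircleMedian (u : EuclideanSpace ℝ (Fin 2) → ℝ)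
    (x : EuclideanSpace ℝ (Fin 2)) (ε m : ℝ) : Prop :=
  volume {θ ∈ Set.Ico (0:ℝ) (2 * Real.pi) | m ≤ u (circlePt x ε θ)} =
  volume {θ ∈ Set.Ico (0:ℝ) (2 * Real.pi) | u (circlePt x ε θ) ≤ m}

lemma pd_def' {N : ℕ} (u : EuclideanSpace ℝ (Fin N) → ℝ) (i : Fin N)
    (x : EuclideanSpace ℝ (Fin N)) :
    pd u i x = fderiv ℝ u x (EuclideanSpace.single i 1) := rfl

lemma med_aux_single_smul (i : Fin 2) (r : ℝ) :
    (EuclideanSpace.single i r : EuclideanSpace ℝ (Fin 2))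
      = r • EuclideanSpace.single i (1:ℝ) := by
  ext j
  simp [EuclideanSpace.single_apply, PiLp.smul_apply, mul_ite]

lemma med_aux_meas_cos_band {α t : ℝ} (hα0 : 0 ≤ α) (hα2 : α ≤ 2 * π)
    (ht : 0 < t) (ht1 : t < 1) :
    volume {θ ∈ Set.Ico (0:ℝ) (2 * π) | t ≤ Real.cos (θ - α)} ≤
      ENNReal.ofReal (2 * Real.arccos t) := by
  have hπ : 0 < π := pi_pos
  set r := Real.arccos t with hrdef
  have hr0 : 0 < r := Real.arccos_pos.2 ht1
  have hr2 : r < π / 2 := Real.arccos_lt_pi_div_two.2 ht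
  have hcr : Real.cos r = t := Real.cos_arccos (by linarith) ht1.le
  have hsub : {θ ∈ Set.Ico (0:ℝ) (2 * π) | t ≤ Real.cos (θ - α)} ⊆
      ((Icc (α - 2*π - r) (α - 2*π + r) ∪ Icc (α - r) (α + r)) ∪
        Icc (α + 2*π - r) (α + 2*π + r)) ∩ Ico (0:ℝ) (2*π) := by
    rintro θ ⟨⟨hθ0, hθ2⟩, hcos⟩
    refine ⟨?_, hθ0, hθ2⟩
    have key : ∀ u : ℝ, |u| ≤ π → Real.cos u = Real.cos (θ - α) → |u| ≤ r := by
      intro u h1 h2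
      by_contra hcon
      push_neg at hcon
      have h3 : Real.cos |u| < Real.cos r :=
        Real.cos_lt_cos_of_nonneg_of_le_pi (Real.arccos_nonneg t) h1 hcon
      rw [Real.cos_abs, h2, hcr] at h3
      linarith
    rcases lt_or_ge (θ - α) (-π) with h | h
    · left; left
      have h1 : |θ - α + 2*π| ≤ π := by
        rw [abs_le]; constructor <;> nlinarith
      have := key _ h1 (Real.cos_add_two_pi _)
      rw [abs_le] at this
      exact ⟨by linarith [this.1], by linarith [this.2]⟩
    · rcases le_or_gt (θ - α) π with h' | h'
      · left; right
        have := key _ (abs_le.2 ⟨by linarith, h'⟩) rfl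
        rw [abs_le] at this
        exact ⟨by linarith [this.1], by linarith [this.2]⟩
      · right
        have h1 : |θ - α - 2*π| ≤ π := by
          rw [abs_le]; constructor <;> nlinarith
        have := key _ h1 (Real.cos_sub_two_pi _)
        rw [abs_le] at this
        exact ⟨by linarith [this.1], by linarith [this.2]⟩
  refine (measure_mono hsub).trans ?_
  have piece : ∀ p q : ℝ, volume (Icc p q ∩ Ico 0 (2*π)) ≤
      ENNReal.ofReal (max (min q (2*π) - max p 0) 0) := by
    intro p q
    have hss : Icc p q ∩ Ico 0 (2*π) ⊆ Icc (max p 0) (min q (2*π)) := fun z hz =>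
      ⟨max_le hz.1.1 hz.2.1, le_min hz.1.2 hz.2.2.le⟩
    refine (measure_mono hss).trans ?_
    rw [Real.volume_Icc]
    exact ENNReal.ofReal_le_ofReal (le_max_left _ _)
  rw [Set.union_inter_distrib_right, Set.union_inter_distrib_right]
  refine (measure_union_le _ _).trans ?_
  refine (add_le_add (measure_union_le _ _) (piece _ _)).trans ?_
  refine (add_le_add (add_le_add (piece _ _) (piece _ _)) le_rfl).trans ?_
  rw [← ENNReal.ofReal_add (le_max_right _ _) (le_max_right _ _),
    ← ENNReal.ofReal_add (by positivity) (le_max_right _ _)]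
  refine ENNReal.ofReal_le_ofReal ?_
  have e1 : min (α - 2*π + r) (2*π) = α - 2*π + r := min_eq_left (by linarith)
  have e2 : max (α - 2*π - r) 0 = 0 := max_eq_right (by linarith)
  have e3 : min (α + 2*π + r) (2*π) = 2*π := min_eq_right (by linarith)
  have e4 : max (α + 2*π - r) 0 = α + 2*π - r := max_eq_left (by linarith)
  rw [e1, e2, e3, e4]
  rcases le_total (α + r) (2*π) with h1 | h1
  · have f1 : min (α + r) (2*π) = α + r := min_eq_left h1
    have f2 : max (α - 2*π + r - 0) 0 = 0 := max_eq_right (by linarith)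
    rw [f1, f2]
    rcases le_total (α - r) 0 with h2 | h2
    · have f3 : max (α - r) 0 = 0 := max_eq_right h2
      rw [f3]
      have f4 : max (α + r - 0) 0 = α + r := by
        rw [max_eq_left (by linarith)]; ring
      have f5 : max (2*π - (α + 2*π - r)) 0 = r - α := by
        rw [max_eq_left (by linarith)]; ring
      rw [f4, f5]; linarith
    · have f3 : max (α - r) 0 = α - r := max_eq_left h2
      rw [f3]
      have f4 : max (α + r - (α - r)) 0 = 2*r := by
        rw [max_eq_left (by linarith)]; ring
      have f5 : max (2*π - (α + 2*π - r)) 0 = 0 :=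
        max_eq_right (by linarith)
      rw [f4, f5]; linarith
  · have f1 : min (α + r) (2*π) = 2*π := min_eq_right h1
    have f2 : max (α - r) 0 = α - r := max_eq_left (by linarith)
    rw [f1, f2]
    have f3 : max (α - 2*π + r - 0) 0 = α - 2*π + r := by
      rw [max_eq_left (by linarith)]; ring
    have f4 : max (2*π - (α - r)) 0 = 2*π - α + r := by
      rw [max_eq_left (by linarith)]; ring
    have f5 : max (2*π - (α + 2*π - r)) 0 = 0 := max_eq_right (by linarith)
    rw [f3, f4, f5]; linarith

lemma med_aux_quad {E : Type*} [NormedAddCommGroup E] [NormedSpace ℝ E]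
    {φ : E → ℝ} {Ω : Set E} (hΩ : IsOpen Ω) (hφ : ContDiffOn ℝ 2 φ Ω) {x : E} (hx : x ∈ Ω) :
    (fun h => φ (x + h) - φ x - fderiv ℝ φ x h
        - (1/2) * fderiv ℝ (fderiv ℝ φ) x h h) =o[𝓝 0] fun h => ‖h‖ ^ 2 := by
  set L := fderiv ℝ φ x with hL
  set H := fderiv ℝ (fderiv ℝ φ) x with hH
  have hmem : Ω ∈ 𝓝 x := hΩ.mem_nhds hx
  have hdφ : ∀ y ∈ Ω, HasFDerivAt φ (fderiv ℝ φ y) y := fun y hy =>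
    (((hφ.differentiableOn (by norm_num)) y hy).differentiableAt (hΩ.mem_nhds hy)).hasFDerivAt
  have hfc1 : ContDiffOn ℝ 1 (fderiv ℝ φ) Ω := hφ.fderiv_of_isOpen hΩ (by norm_num)
  have hHd : HasFDerivAt (fderiv ℝ φ) H x :=
    (((hfc1.differentiableOn (by norm_num)) x hx).differentiableAt hmem).hasFDerivAt
  have hsym : ∀ v w, H v w = H w v :=
    second_derivative_symmetric_of_eventually
      (Filter.eventually_of_mem hmem hdφ) hHd
  rw [isLittleO_iff]
  intro η hη
  have e1 : ∀ᶠ h in 𝓝 (0:E), x + h ∈ Ω := by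
    have hc : ContinuousAt (fun h : E => x + h) 0 :=
      (continuous_const.add continuous_id).continuousAt
    have : x + 0 ∈ Ω := by simpa using hx
    exact hc.preimage_mem_nhds (hΩ.mem_nhds this)
  have e2 := isLittleO_iff.1 (hasFDerivAt_iff_isLittleO_nhds_zero.1 hHd) hη
  obtain ⟨δ, hδ0, hδ⟩ := eventually_nhds_iff_ball.1 (e1.and e2)
  rw [eventually_iff_exists_mem]
  refine ⟨ball 0 δ, ball_mem_nhds 0 hδ0, fun h hh => ?_⟩
  have hnorm : ‖h‖ < δ := by simpa using hh
  set G : E → ℝ := fun y => φ y - L (y - x) - (1/2) * H (y - x) (y - x) with hG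
  have hseg : ∀ y ∈ segment ℝ x (x + h), ‖y - x‖ ≤ ‖h‖ := by
    intro y hy
    rw [segment_eq_image'] at hy
    obtain ⟨t, ⟨ht0, ht1⟩, rfl⟩ := hy
    rw [add_sub_cancel_left, add_sub_cancel_left, norm_smul]
    calc ‖t‖ * ‖h‖ ≤ 1 * ‖h‖ := by
          apply mul_le_mul_of_nonneg_right _ (norm_nonneg h)
          rw [Real.norm_eq_abs, abs_of_nonneg ht0]; exact ht1
      _ = ‖h‖ := one_mul _
  have key : ∀ y ∈ segment ℝ x (x + h),
      HasFDerivWithinAt G (fderiv ℝ φ y - L - H (y - x)) (segment ℝ x (x + h)) y := by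
    intro y hy
    have hyΩ : x + (y - x) ∈ Ω := (hδ (y - x) (by
      simpa using lt_of_le_of_lt (hseg y hy) hnorm)).1
    rw [add_sub_cancel] at hyΩ
    have du : HasFDerivAt (fun y : E => y - x) (ContinuousLinearMap.id ℝ E) y :=
      (hasFDerivAt_id y).sub_const x
    have d1 : HasFDerivAt (fun y : E => L (y - x)) L y := by
      have h0 : HasFDerivAt (fun y : E => L (y - x))
          (L.comp (ContinuousLinearMap.id ℝ E)) y := L.hasFDerivAt.comp y du
      rwa [ContinuousLinearMap.comp_id] at h0
    have dc : HasFDerivAt (fun y : E => H (y - x)) H y := by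
      have h0 : HasFDerivAt (fun y : E => H (y - x))
          (H.comp (ContinuousLinearMap.id ℝ E)) y := H.hasFDerivAt.comp y du
      rwa [ContinuousLinearMap.comp_id] at h0
    have d2 := dc.clm_apply du
    have d3 := ((hdφ y hyΩ).sub d1).sub (d2.const_mul (1/2 : ℝ))
    have heq : (fderiv ℝ φ y - L - H (y - x)) = fderiv ℝ φ y - L -
        (1/2 : ℝ) • ((H (y - x)).comp (ContinuousLinearMap.id ℝ E) + H.flip (y - x)) := by
      ext w
      simp only [ContinuousLinearMap.sub_apply, ContinuousLinearMap.smul_apply,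
        ContinuousLinearMap.add_apply, ContinuousLinearMap.comp_apply,
        ContinuousLinearMap.id_apply, ContinuousLinearMap.coe_smul', Pi.smul_apply,
        smul_eq_mul, ContinuousLinearMap.flip_apply]
      rw [hsym w (y - x)]
      ring
    rw [heq]
    exact d3.hasFDerivWithinAt
  have bound : ∀ y ∈ segment ℝ x (x + h), ‖fderiv ℝ φ y - L - H (y - x)‖ ≤ η * ‖h‖ := by
    intro y hy
    have h1 : ‖y - x‖ < δ := lt_of_le_of_lt (hseg y hy) hnorm
    have := (hδ (y - x) (by simpa using h1)).2
    rw [add_sub_cancel] at this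
    calc ‖fderiv ℝ φ y - L - H (y - x)‖ ≤ η * ‖y - x‖ := this
      _ ≤ η * ‖h‖ := mul_le_mul_of_nonneg_left (hseg y hy) hη.le
  have mvt := Convex.norm_image_sub_le_of_norm_hasFDerivWithin_le key bound
    (convex_segment x (x + h)) (left_mem_segment ℝ x (x + h))
    (right_mem_segment ℝ x (x + h))
  have hGx : G x = φ x := by simp [hG]
  have hGxh : G (x + h) = φ (x + h) - L h - (1/2) * H h h := by
    show φ (x + h) - L (x + h - x) - (1/2) * H (x + h - x) (x + h - x) = _
    rw [add_sub_cancel_left]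
  rw [hGx, hGxh, add_sub_cancel_left] at mvt
  calc ‖φ (x + h) - φ x - L h - (1/2) * H h h‖
      = ‖φ (x + h) - L h - (1/2) * H h h - φ x‖ := by ring_nf
    _ ≤ η * ‖h‖ * ‖h‖ := mvt
    _ = η * ‖‖h‖ ^ 2‖ := by
        rw [Real.norm_of_nonneg (sq_nonneg _)]; ring

lemma med_aux_scalar (a b g X Y C S H00 Hm H11 : ℝ) (hg : 0 < g) (hg2 : g^2 = a^2 + b^2)
    (hXY : X^2 + Y^2 = 1) (hC : g * C = a * X - b * Y) (hS : g * S = b * X + a * Y) :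
    |C^2 * H00 + C * S * Hm + S^2 * H11 - (b^2 * H00 - a * b * Hm + a^2 * H11) / g^2|
      ≤ (2 * (|H00| + |Hm| + |H11|) + 1) * |X| := by
  have hg0 : g ≠ 0 := hg.ne'
  set c0 : ℝ := (a^2 - b^2) * X - 2*a*b*Y with hc0def
  set c1 : ℝ := 2*a*b*X + (a^2 - b^2)*Y with hc1def
  set c2 : ℝ := (b^2 - a^2) * X + 2*a*b*Y with hc2def
  set W : ℝ := c0 * H00 + c1 * Hm + c2 * H11 with hW
  have hC' : C = (a * X - b * Y) / g := by field_simp; linarith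
  have hS' : S = (b * X + a * Y) / g := by field_simp; linarith
  have hid : C^2 * H00 + C * S * Hm + S^2 * H11
      - (b^2 * H00 - a * b * Hm + a^2 * H11) / g^2 = X * W / g^2 := by
    rw [hC', hS', hW, hc0def, hc1def, hc2def]
    field_simp
    linear_combination (b^2*H00 - a*b*Hm + a^2*H11) * hXY
  have hX1 : |X| ≤ 1 := by nlinarith [sq_abs X, abs_nonneg X, sq_nonneg Y]
  have hY1 : |Y| ≤ 1 := by nlinarith [sq_abs Y, abs_nonneg Y, sq_nonneg X]
  have habdiff : |a^2 - b^2| ≤ g^2 := abs_le.2 ⟨by nlinarith, by nlinarith⟩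
  have hab2 : |2*a*b| ≤ g^2 :=
    abs_le.2 ⟨by nlinarith [sq_nonneg (a+b)], by nlinarith [sq_nonneg (a-b)]⟩
  have hg2pos : (0:ℝ) < g^2 := by positivity
  have bnd : ∀ u v : ℝ, |u| ≤ g^2 → |v| ≤ g^2 → ∀ P Q : ℝ, |P| ≤ 1 → |Q| ≤ 1 →
      |u * P + v * Q| ≤ 2 * g^2 := by
    intro u v hu hv P Q hP hQ
    calc |u * P + v * Q| ≤ |u * P| + |v * Q| := abs_add_le _ _
      _ = |u| * |P| + |v| * |Q| := by rw [abs_mul, abs_mul]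
      _ ≤ g^2 * 1 + g^2 * 1 := by gcongr
      _ = 2 * g^2 := by ring
  have hb0 : |c0| ≤ 2 * g^2 := by
    have := bnd (a^2 - b^2) (-(2*a*b)) habdiff (by rwa [abs_neg]) X Y hX1 hY1
    rw [hc0def]
    calc |(a^2 - b^2) * X - 2*a*b*Y| = |(a^2-b^2) * X + (-(2*a*b)) * Y| := by ring_nf
      _ ≤ 2 * g^2 := this
  have hb1 : |c1| ≤ 2 * g^2 := bnd _ _ hab2 habdiff X Y hX1 hY1
  have hb2 : |c2| ≤ 2 * g^2 := by
    have := bnd (-(a^2 - b^2)) (2*a*b) (by rwa [abs_neg]) hab2 X Y hX1 hY1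
    rw [hc2def]
    calc |(b^2 - a^2) * X + 2*a*b*Y| = |(-(a^2-b^2)) * X + (2*a*b) * Y| := by ring_nf
      _ ≤ 2 * g^2 := this
  have hWb : |W| ≤ 2 * g^2 * (|H00| + |Hm| + |H11|) := by
    calc |W| ≤ |c0 * H00 + c1 * Hm| + |c2 * H11| := abs_add_le _ _
      _ ≤ |c0 * H00| + |c1 * Hm| + |c2 * H11| := by
          have := abs_add_le (c0 * H00) (c1 * Hm); linarith
      _ = |c0| * |H00| + |c1| * |Hm| + |c2| * |H11| := by rw [abs_mul, abs_mul, abs_mul]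
      _ ≤ (2*g^2) * |H00| + (2*g^2) * |Hm| + (2*g^2) * |H11| := by gcongr
      _ = 2 * g^2 * (|H00| + |Hm| + |H11|) := by ring
  rw [hid, abs_div, abs_mul, abs_of_pos hg2pos]
  calc |X| * |W| / g^2 ≤ |X| * (2 * g^2 * (|H00| + |Hm| + |H11|)) / g^2 := by gcongr
    _ = 2 * (|H00| + |Hm| + |H11|) * |X| := by field_simp
    _ ≤ (2 * (|H00| + |Hm| + |H11|) + 1) * |X| := by nlinarith [abs_nonneg X]

lemma med_aux_chainA (ε g M η X Qv c Fv mv px : ℝ) (hε0 : 0 < ε) (hg : 0 < g)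
    (hη : 0 < η) (hεM : ε * M ≤ g)
    (hmb : px + ε^2/2*c + η*ε^2 < mv) (hF : mv ≤ Fv)
    (hup : Fv ≤ px + ε*(g*X) + ε^2/2*Qv + η/2*ε^2)
    (hQup : Qv ≤ c + M*|X|) : η * ε / (4*g) ≤ X := by
  have h5 : ε^2/2 * Qv ≤ ε^2/2 * (c + M*|X|) :=
    mul_le_mul_of_nonneg_left hQup (by positivity)
  have e1 : ε^2/2 * (c + M*|X|) = ε^2/2*c + ε^2/2*(M*|X|) := by ring
  have hkey : η/2 * ε^2 ≤ ε*(g*X) + ε^2/2*(M*|X|) := by linarith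
  rcases le_or_gt X 0 with hXn | hXp
  · exfalso
    rw [abs_of_nonpos hXn] at hkey
    have h7 : 0 ≤ ε * (-X) := mul_nonneg hε0.le (neg_nonneg.2 hXn)
    have h8 : 0 ≤ g - ε*M/2 := by linarith
    have h9 : 0 ≤ (ε*(-X)) * (g - ε*M/2) := mul_nonneg h7 h8
    have h10 : ε*(g*X) + ε^2/2*(M*(-X)) = -((ε*(-X)) * (g - ε*M/2)) := by ring
    have h11 : 0 < η/2 * ε^2 := by positivity
    linarith
  · rw [abs_of_pos hXp] at hkey
    have hmm : (ε*M)*(ε*X) ≤ g*(ε*X) :=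
      mul_le_mul_of_nonneg_right hεM (mul_nonneg hε0.le hXp.le)
    have e2 : ε^2/2*(M*X) = ((ε*M)*(ε*X))/2 := by ring
    have e3 : ε/2*(g*X) = (g*(ε*X))/2 := by ring
    have h6 : ε^2/2*(M*X) ≤ ε/2*(g*X) := by linarith
    have e4 : ε/2*(g*X) = (1/2)*(ε*(g*X)) := by ring
    have hkey2 : η/2*ε^2 ≤ 3/2*(ε*(g*X)) := by linarith
    have e5 : ε*(η/2*ε) = η/2*ε^2 := by ring
    have e6 : ε*(3/2*(g*X)) = 3/2*(ε*(g*X)) := by ring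
    have h7 : ε * (η/2*ε) ≤ ε * (3/2*(g*X)) := by linarith
    have h8 : η/2*ε ≤ 3/2*(g*X) := le_of_mul_le_mul_left h7 hε0
    rw [div_le_iff₀ (by positivity : (0:ℝ) < 4*g)]
    have h9 : 0 ≤ g*X := mul_nonneg hg.le hXp.le
    have e7 : X*(4*g) = 4*(g*X) := by ring
    linarith

lemma med_aux_chainB (ε g M η X Qv c Fv mv px : ℝ) (hε0 : 0 < ε) (hg : 0 < g)
    (hη : 0 < η) (hεM : ε * M ≤ g)
    (hms : mv < px + ε^2/2*c - η*ε^2) (hF : Fv ≤ mv)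
    (hlow : px + ε*(g*X) + ε^2/2*Qv - η/2*ε^2 ≤ Fv)
    (hQlow : c - M*|X| ≤ Qv) : η * ε / (4*g) ≤ -X := by
  have h5 : ε^2/2 * (c - M*|X|) ≤ ε^2/2 * Qv :=
    mul_le_mul_of_nonneg_left hQlow (by positivity)
  have e1 : ε^2/2 * (c - M*|X|) = ε^2/2*c - ε^2/2*(M*|X|) := by ring
  have hkey : ε*(g*X) + η/2 * ε^2 ≤ ε^2/2*(M*|X|) := by linarith
  rcases le_or_gt 0 X with hXn | hXp
  · exfalso
    rw [abs_of_nonneg hXn] at hkey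
    have hmm : (ε*M)*(ε*X) ≤ g*(ε*X) :=
      mul_le_mul_of_nonneg_right hεM (mul_nonneg hε0.le hXn)
    have e2 : ε^2/2*(M*X) = ((ε*M)*(ε*X))/2 := by ring
    have e3 : ε/2*(g*X) = (g*(ε*X))/2 := by ring
    have h6 : ε^2/2*(M*X) ≤ ε/2*(g*X) := by linarith
    have h9 : 0 ≤ g*X := mul_nonneg hg.le hXn
    have e4 : ε/2*(g*X) = (1/2)*(ε*(g*X)) := by ring
    have e8 : ε*(g*X) = ε*(g*X) := rfl
    have h10 : 0 ≤ ε*(g*X) := mul_nonneg hε0.le h9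
    have h11 : 0 < η/2 * ε^2 := by positivity
    linarith
  · rw [abs_of_neg hXp] at hkey
    have hmm : (ε*M)*(ε*(-X)) ≤ g*(ε*(-X)) :=
      mul_le_mul_of_nonneg_right hεM (mul_nonneg hε0.le (neg_nonneg.2 hXp.le))
    have e2 : ε^2/2*(M*(-X)) = ((ε*M)*(ε*(-X)))/2 := by ring
    have e3 : ε/2*(g*(-X)) = (g*(ε*(-X)))/2 := by ring
    have h6 : ε^2/2*(M*(-X)) ≤ ε/2*(g*(-X)) := by linarith
    have e4 : ε/2*(g*(-X)) = (1/2)*(ε*(g*(-X))) := by ring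
    have e9 : ε*(g*X) = -(ε*(g*(-X))) := by ring
    have hkey2 : η/2*ε^2 ≤ 3/2*(ε*(g*(-X))) := by linarith
    have e5 : ε*(η/2*ε) = η/2*ε^2 := by ring
    have e6 : ε*(3/2*(g*(-X))) = 3/2*(ε*(g*(-X))) := by ring
    have h7 : ε * (η/2*ε) ≤ ε * (3/2*(g*(-X))) := by linarith
    have h8 : η/2*ε ≤ 3/2*(g*(-X)) := le_of_mul_le_mul_left h7 hε0
    rw [div_le_iff₀ (by positivity : (0:ℝ) < 4*g)]
    have h9 : 0 ≤ g*(-X) := mul_nonneg hg.le (neg_nonneg.2 hXp.le)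
    have e7 : (-X)*(4*g) = 4*(g*(-X)) := by ring
    linarith

/-- median expansion and the 1-Laplacian in the plane. -/
theorem median_expansion (Ω : Set (EuclideanSpace ℝ (Fin 2))) (hΩ : IsOpen Ω)
    (φ : EuclideanSpace ℝ (Fin 2) → ℝ) (hφ : ContDiffOn ℝ 2 φ Ω)
    (x : EuclideanSpace ℝ (Fin 2)) (hx : x ∈ Ω) (hD : fderiv ℝ φ x ≠ 0)
    (m : ℝ → ℝ) (hm : ∀ᶠ ε in 𝓝[>] (0:ℝ), IsCircleMedian φ x ε (m ε)) :
    (fun ε : ℝ => φ x - m ε + ε ^ 2 / 2 * oneLap φ x)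
      =o[𝓝[>] (0:ℝ)] fun ε => ε ^ 2 := by
  have hπ : 0 < π := pi_pos
  have hmem : Ω ∈ 𝓝 x := hΩ.mem_nhds hx
  have hdφ : ∀ y ∈ Ω, HasFDerivAt φ (fderiv ℝ φ y) y := fun y hy =>
    (((hφ.differentiableOn (by norm_num)) y hy).differentiableAt (hΩ.mem_nhds hy)).hasFDerivAt
  have hfc1 : ContDiffOn ℝ 1 (fderiv ℝ φ) Ω := hφ.fderiv_of_isOpen hΩ (by norm_num)
  have hHd : HasFDerivAt (fderiv ℝ φ) (fderiv ℝ (fderiv ℝ φ) x) x :=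
    (((hfc1.differentiableOn (by norm_num)) x hx).differentiableAt hmem).hasFDerivAt
  set H := fderiv ℝ (fderiv ℝ φ) x with hHdef
  set a := pd φ 0 x with hadef
  set b := pd φ 1 x with hbdef
  set g := Real.sqrt (a^2 + b^2) with hgdef
  have hab : a^2 + b^2 ≠ 0 := by
    intro h0
    have ha : a = 0 := by nlinarith [sq_nonneg a, sq_nonneg b]
    have hb : b = 0 := by nlinarith [sq_nonneg a, sq_nonneg b]
    apply hD
    ext y
    have hy : y = y 0 • EuclideanSpace.single 0 (1:ℝ) + y 1 • EuclideanSpace.single 1 (1:ℝ) := by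
      ext j
      fin_cases j <;>
        simp [EuclideanSpace.single_apply, PiLp.add_apply, PiLp.smul_apply]
    rw [hy]
    simp only [map_add, _root_.map_smul, smul_eq_mul, ContinuousLinearMap.zero_apply]
    rw [← pd_def', ← pd_def', ← hadef, ← hbdef, ha, hb]
  have hg : 0 < g := Real.sqrt_pos.2 (lt_of_le_of_ne (by positivity) (Ne.symm hab))
  have hg2 : g^2 = a^2 + b^2 := Real.sq_sqrt (by positivity)
  have hgx : gradNorm φ x = g := by
    show Real.sqrt (∑ i, (pd φ i x)^2) = g
    rw [Fin.sum_univ_two, ← hadef, ← hbdef]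
  have hpd : ∀ i : Fin 2, HasFDerivAt (fun y => pd φ i y)
      (H.flip (EuclideanSpace.single i 1)) x := by
    intro i
    have h0 := hHd.clm_apply (hasFDerivAt_const (EuclideanSpace.single i (1:ℝ)) x)
    simp only [ContinuousLinearMap.comp_zero, zero_add] at h0
    exact h0
  have hgfun : gradNorm φ = fun y => Real.sqrt (pd φ 0 y * pd φ 0 y + pd φ 1 y * pd φ 1 y) := by
    funext y
    show Real.sqrt (∑ i, (pd φ i y)^2) = _
    rw [Fin.sum_univ_two, sq, sq]
  have hS : HasFDerivAt (fun y => pd φ 0 y * pd φ 0 y + pd φ 1 y * pd φ 1 y)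
      ((a • (H.flip (EuclideanSpace.single 0 1)) + a • (H.flip (EuclideanSpace.single 0 1)))
        + (b • (H.flip (EuclideanSpace.single 1 1)) + b • (H.flip (EuclideanSpace.single 1 1))))
      x := ((hpd 0).mul (hpd 0)).add ((hpd 1).mul (hpd 1))
  have hSx : pd φ 0 x * pd φ 0 x + pd φ 1 x * pd φ 1 x = a^2 + b^2 := by
    rw [← hadef, ← hbdef]; ring
  have hgrad : HasFDerivAt (gradNorm φ)
      ((1 / (2 * g)) • ((a • (H.flip (EuclideanSpace.single 0 1)) + a • (H.flip (EuclideanSpace.single 0 1)))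
        + (b • (H.flip (EuclideanSpace.single 1 1)) + b • (H.flip (EuclideanSpace.single 1 1))))) x := by
    rw [hgfun]
    have := hS.sqrt (by rw [hSx]; exact hab)
    rwa [hSx, ← hgdef] at this
  have hinv0 : HasDerivAt (fun y : ℝ => y⁻¹) (-(g^2)⁻¹) (gradNorm φ x) := by
    rw [hgx]; exact hasDerivAt_inv hg.ne'
  have hinv : HasFDerivAt (fun y => (gradNorm φ y)⁻¹)
      ((-(g^2)⁻¹) • ((1 / (2 * g)) • ((a • (H.flip (EuclideanSpace.single 0 1)) + a • (H.flip (EuclideanSpace.single 0 1)))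
        + (b • (H.flip (EuclideanSpace.single 1 1)) + b • (H.flip (EuclideanSpace.single 1 1)))))) x :=
    hinv0.comp_hasFDerivAt x hgrad
  have hquot : ∀ i : Fin 2, HasFDerivAt (fun y => pd φ i y / gradNorm φ y)
      (pd φ i x • ((-(g^2)⁻¹) • ((1 / (2 * g)) • ((a • (H.flip (EuclideanSpace.single 0 1)) + a • (H.flip (EuclideanSpace.single 0 1)))
        + (b • (H.flip (EuclideanSpace.single 1 1)) + b • (H.flip (EuclideanSpace.single 1 1))))))
        + g⁻¹ • (H.flip (EuclideanSpace.single i 1))) x := by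
    intro i
    have heq : (fun y => pd φ i y / gradNorm φ y)
        = fun y => pd φ i y * (gradNorm φ y)⁻¹ := by
      funext y; rw [div_eq_mul_inv]
    rw [heq]
    have := (hpd i).mul hinv
    rwa [hgx] at this
  have honeLap : oneLap φ x =
      (b^2 * H (EuclideanSpace.single 0 1) (EuclideanSpace.single 0 1)
        - a * b * (H (EuclideanSpace.single 0 1) (EuclideanSpace.single 1 1)
          + H (EuclideanSpace.single 1 1) (EuclideanSpace.single 0 1))
        + a^2 * H (EuclideanSpace.single 1 1) (EuclideanSpace.single 1 1)) / g^2 := by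
    show gradNorm φ x * ∑ i : Fin 2, pd (fun y => pd φ i y / gradNorm φ y) i x = _
    rw [hgx, Fin.sum_univ_two, pd_def', pd_def', (hquot 0).fderiv, (hquot 1).fderiv]
    simp only [ContinuousLinearMap.add_apply, ContinuousLinearMap.smul_apply,
      ContinuousLinearMap.flip_apply, smul_eq_mul, ← hadef, ← hbdef]
    have hgne : g ≠ 0 := hg.ne'
    generalize (H (EuclideanSpace.single 0 1)) (EuclideanSpace.single 0 1) = P00
    generalize (H (EuclideanSpace.single 0 1)) (EuclideanSpace.single 1 1) = P01
    generalize (H (EuclideanSpace.single 1 1)) (EuclideanSpace.single 0 1) = P10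
    generalize (H (EuclideanSpace.single 1 1)) (EuclideanSpace.single 1 1) = P11
    field_simp
    linear_combination (2*(P00 + P11)) * hg2
  -- the angle of the gradient
  have haabs : |a| ≤ g := by
    rw [← Real.sqrt_sq_eq_abs, hgdef]
    exact Real.sqrt_le_sqrt (by nlinarith [sq_nonneg b])
  have hd1 : -1 ≤ a / g := by
    rw [le_div_iff₀ hg]
    have := (abs_le.1 haabs).1; linarith
  have hd2 : a / g ≤ 1 := by
    rw [div_le_iff₀ hg]
    have := (abs_le.1 haabs).2; linarith
  set α := if 0 ≤ b then Real.arccos (a/g) else -Real.arccos (a/g) with hαdef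
  have hαlo : -π ≤ α := by
    rw [hαdef]; split
    · linarith [Real.arccos_nonneg (a/g)]
    · simp only [neg_le_neg_iff]; exact Real.arccos_le_pi _
  have hαhi : α ≤ π := by
    rw [hαdef]; split
    · exact Real.arccos_le_pi _
    · linarith [Real.arccos_nonneg (a/g)]
  have hcosα : Real.cos α = a / g := by
    rw [hαdef]; split
    · exact Real.cos_arccos hd1 hd2
    · rw [Real.cos_neg]; exact Real.cos_arccos hd1 hd2
  have hsinα : Real.sin α = b / g := by
    have hsq : 1 - (a/g)^2 = (b/g)^2 := by
      field_simp
      linarith [hg2]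
    rw [hαdef]; split
    · rename_i hb0
      rw [Real.sin_arccos, hsq, Real.sqrt_sq (by positivity)]
    · rename_i hb0
      push_neg at hb0
      rw [Real.sin_neg, Real.sin_arccos, hsq]
      rw [show (b/g)^2 = (-(b/g))^2 by ring, Real.sqrt_sq (by rw [← neg_div]; exact div_nonneg (by linarith) hg.le)]
      ring
  have haeq : a = g * Real.cos α := by rw [hcosα]; field_simp
  have hbeq : b = g * Real.sin α := by rw [hsinα]; field_simp
  -- abbreviations
  set c := oneLap φ x with hcdef
  set M := 2 * (|H (EuclideanSpace.single 0 1) (EuclideanSpace.single 0 1)|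
    + |H (EuclideanSpace.single 0 1) (EuclideanSpace.single 1 1)
        + H (EuclideanSpace.single 1 1) (EuclideanSpace.single 0 1)|
    + |H (EuclideanSpace.single 1 1) (EuclideanSpace.single 1 1)|) + 1 with hMdef
  have hM0 : 0 < M := by positivity
  set Q : ℝ → ℝ := fun θ => (Real.cos θ)^2 * (H (EuclideanSpace.single 0 1) (EuclideanSpace.single 0 1))
    + Real.cos θ * Real.sin θ * (H (EuclideanSpace.single 0 1) (EuclideanSpace.single 1 1)
        + H (EuclideanSpace.single 1 1) (EuclideanSpace.single 0 1))
    + (Real.sin θ)^2 * (H (EuclideanSpace.single 1 1) (EuclideanSpace.single 1 1)) with hQdef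
  have hQc : ∀ θ : ℝ, |Q θ - c| ≤ M * |Real.cos (θ - α)| := by
    intro θ
    have hXY : (Real.cos (θ - α))^2 + (Real.sin (θ - α))^2 = 1 := by
      rw [add_comm]; exact Real.sin_sq_add_cos_sq _
    have hsc : θ - α + α = θ := by ring
    have hCeq : g * Real.cos θ = a * Real.cos (θ - α) - b * Real.sin (θ - α) := by
      have e := Real.cos_add (θ - α) α
      rw [hsc] at e
      rw [e, haeq, hbeq]; ring
    have hSeq : g * Real.sin θ = b * Real.cos (θ - α) + a * Real.sin (θ - α) := by
      have e := Real.sin_add (θ - α) α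
      rw [hsc] at e
      rw [e, haeq, hbeq]; ring
    have := med_aux_scalar a b g (Real.cos (θ - α)) (Real.sin (θ - α))
      (Real.cos θ) (Real.sin θ)
      (H (EuclideanSpace.single 0 1) (EuclideanSpace.single 0 1))
      (H (EuclideanSpace.single 0 1) (EuclideanSpace.single 1 1)
        + H (EuclideanSpace.single 1 1) (EuclideanSpace.single 0 1))
      (H (EuclideanSpace.single 1 1) (EuclideanSpace.single 1 1))
      hg hg2 hXY hCeq hSeq
    simp only [hQdef, hMdef]
    rw [honeLap]
    exact this
  -- Taylor expansion
  have htay := med_aux_quad hΩ hφ hx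
  rw [isLittleO_iff]
  intro η hη
  have htay2 := isLittleO_iff.1 htay (show (0:ℝ) < η/2 by positivity)
  obtain ⟨δ, hδ0, hδT⟩ := eventually_nhds_iff_ball.1 htay2
  set δ' := min δ (min (g / M) (4 * g / η)) with hδ'def
  have hδ'0 : 0 < δ' := by positivity
  have hIoo : Ioo (0:ℝ) δ' ∈ 𝓝[>] (0:ℝ) := Ioo_mem_nhdsGT hδ'0
  filter_upwards [hm, hIoo] with ε hmed hεI
  obtain ⟨hε0, hεδ'⟩ := hεI
  have hεδ : ε < δ := lt_of_lt_of_le hεδ' (min_le_left _ _)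
  have hεM : ε * M ≤ g := by
    have h1 : ε < g / M := lt_of_lt_of_le hεδ' ((min_le_right _ _).trans (min_le_left _ _))
    rw [lt_div_iff₀ hM0] at h1
    linarith
  have hεη : η * ε < 4 * g := by
    have h1 : ε < 4 * g / η := lt_of_lt_of_le hεδ' ((min_le_right _ _).trans (min_le_right _ _))
    rw [lt_div_iff₀ hη] at h1
    linarith
  -- pointwise Taylor estimate on the circle
  have hpt : ∀ θ : ℝ, |φ (circlePt x ε θ) - φ x - ε * (g * Real.cos (θ - α))
      - ε^2/2 * Q θ| ≤ η/2 * ε^2 := by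
    intro θ
    set v : EuclideanSpace ℝ (Fin 2) :=
      EuclideanSpace.single 0 (Real.cos θ) + EuclideanSpace.single 1 (Real.sin θ) with hvdef
    have hvn : ‖v‖ = 1 := by
      rw [hvdef, EuclideanSpace.norm_eq]
      rw [Fin.sum_univ_two]
      simp only [PiLp.add_apply, EuclideanSpace.single_apply]
      norm_num [Real.norm_eq_abs, sq_abs]
    have hεv : ‖ε • v‖ = ε := by
      rw [norm_smul, hvn, mul_one, Real.norm_eq_abs, abs_of_pos hε0]
    have hball : ε • v ∈ ball (0 : EuclideanSpace ℝ (Fin 2)) δ := by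
      rw [mem_ball, dist_zero_right, hεv]; exact hεδ
    have h1 := hδT (ε • v) hball
    have hLv : fderiv ℝ φ x (ε • v) = ε * (g * Real.cos (θ - α)) := by
      rw [_root_.map_smul, hvdef, med_aux_single_smul 0, med_aux_single_smul 1, map_add,
        _root_.map_smul, _root_.map_smul]
      rw [← pd_def', ← pd_def', ← hadef, ← hbdef]
      simp only [smul_eq_mul]
      rw [haeq, hbeq, Real.cos_sub]
      ring
    have hHv : H (ε • v) (ε • v) = ε^2 * Q θ := by
      rw [hvdef, med_aux_single_smul 0, med_aux_single_smul 1]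
      simp only [map_add, _root_.map_smul, ContinuousLinearMap.add_apply,
        ContinuousLinearMap.smul_apply, smul_eq_mul]
      rw [hQdef]
      ring
    have h2 : φ (circlePt x ε θ) - φ x - ε * (g * Real.cos (θ - α)) - ε^2/2 * Q θ
        = φ (x + ε • v) - φ x - fderiv ℝ φ x (ε • v) - (1/2) * H (ε • v) (ε • v) := by
      rw [hLv, hHv]
      have hcp : circlePt x ε θ = x + ε • v := rfl
      rw [hcp]
      ring
    rw [← Real.norm_eq_abs, h2]
    calc ‖φ (x + ε • v) - φ x - fderiv ℝ φ x (ε • v) - (1/2) * H (ε • v) (ε • v)‖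
        ≤ η/2 * ‖‖ε • v‖^2‖ := h1
      _ = η/2 * ε^2 := by rw [hεv, Real.norm_of_nonneg (sq_nonneg _)]
  -- main contradiction argument
  by_contra hcon
  push_neg at hcon
  rw [Real.norm_eq_abs, Real.norm_eq_abs, abs_of_nonneg (sq_nonneg ε)] at hcon
  set A := {θ ∈ Set.Ico (0:ℝ) (2 * π) | m ε ≤ φ (circlePt x ε θ)} with hAdef
  set B := {θ ∈ Set.Ico (0:ℝ) (2 * π) | φ (circlePt x ε θ) ≤ m ε} with hBdef
  have hmeq : volume A = volume B := hmed
  have hcover : Set.Ico (0:ℝ) (2*π) ⊆ A ∪ B := by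
    intro θ hθ
    rcases le_total (m ε) (φ (circlePt x ε θ)) with h | h
    · exact Or.inl ⟨hθ, h⟩
    · exact Or.inr ⟨hθ, h⟩
  have hπA : ENNReal.ofReal π ≤ volume A := by
    by_contra hlt
    push_neg at hlt
    have h1 : volume (Set.Ico (0:ℝ) (2*π)) ≤ volume A + volume B :=
      le_trans (measure_mono hcover) (measure_union_le _ _)
    rw [Real.volume_Ico, ← hmeq] at h1
    have h2 : volume A + volume A < ENNReal.ofReal π + ENNReal.ofReal π :=
      ENNReal.add_lt_add hlt hlt
    rw [← ENNReal.ofReal_add hπ.le hπ.le] at h2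
    have h3 : ENNReal.ofReal (2*π - 0) = ENNReal.ofReal (π + π) := by rw [sub_zero, two_mul]
    rw [h3] at h1
    exact absurd (lt_of_le_of_lt h1 h2) (lt_irrefl _)
  have hπB : ENNReal.ofReal π ≤ volume B := hmeq ▸ hπA
  set t := η * ε / (4*g) with htdef
  have ht0 : 0 < t := by positivity
  have ht1 : t < 1 := by
    rw [htdef, div_lt_one (by positivity)]
    linarith
  have harcc : 2 * Real.arccos t < π := by
    have := Real.arccos_lt_pi_div_two.2 ht0
    linarith
  have hofreal : ENNReal.ofReal (2 * Real.arccos t) < ENNReal.ofReal π :=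
    (ENNReal.ofReal_lt_ofReal_iff hπ).2 harcc
  rcases lt_abs.1 hcon with hzpos | hzneg
  · -- m ε is too small; use the set B
    have hms : m ε < φ x + ε^2/2 * c - η * ε^2 := by linarith
    have hβ0 : 0 ≤ α + π := by linarith
    have hβ2 : α + π ≤ 2*π := by linarith
    have hsubB : B ⊆ {θ ∈ Set.Ico (0:ℝ) (2*π) | t ≤ Real.cos (θ - (α + π))} := by
      rintro θ ⟨hθI, hθm⟩
      refine ⟨hθI, ?_⟩
      rw [show θ - (α + π) = (θ - α) - π by ring, Real.cos_sub_pi]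
      set X := Real.cos (θ - α) with hXdef
      have hpt' := hpt θ
      have hQ' := hQc θ
      have hlow : φ x + ε * (g * X) + ε^2/2 * Q θ - η/2 * ε^2 ≤ φ (circlePt x ε θ) := by
        have := (abs_le.1 hpt').1; linarith
      have hQlow : c - M * |X| ≤ Q θ := by
        have := (abs_le.1 hQ').1; linarith
      exact med_aux_chainB ε g M η X (Q θ) c (φ (circlePt x ε θ)) (m ε) (φ x)
        hε0 hg hη hεM hms hθm hlow hQlow
    have hB1 : volume B ≤ ENNReal.ofReal (2 * Real.arccos t) :=
      (measure_mono hsubB).trans (med_aux_meas_cos_band hβ0 hβ2 ht0 ht1)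
    exact absurd hπB (not_le.2 (lt_of_le_of_lt hB1 hofreal))
  · -- m ε is too large; use the set A
    have hmb : φ x + ε^2/2 * c + η * ε^2 < m ε := by linarith
    set β := if 0 ≤ α then α else α + 2*π with hβdef
    have hβ0 : 0 ≤ β := by
      rw [hβdef]; split
      · assumption
      · linarith
    have hβ2 : β ≤ 2*π := by
      rw [hβdef]; split
      · linarith
      · rename_i h; push_neg at h; linarith
    have hβcos : ∀ θ : ℝ, Real.cos (θ - β) = Real.cos (θ - α) := by
      intro θ
      rw [hβdef]; split
      · rfl
      · rw [show θ - (α + 2*π) = (θ - α) - 2*π by ring, Real.cos_sub_two_pi]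
    have hsubA : A ⊆ {θ ∈ Set.Ico (0:ℝ) (2*π) | t ≤ Real.cos (θ - β)} := by
      rintro θ ⟨hθI, hθm⟩
      refine ⟨hθI, ?_⟩
      rw [hβcos]
      set X := Real.cos (θ - α) with hXdef
      have hpt' := hpt θ
      have hQ' := hQc θ
      have hup : φ (circlePt x ε θ) ≤ φ x + ε * (g * X) + ε^2/2 * Q θ + η/2 * ε^2 := by
        have := (abs_le.1 hpt').2; linarith
      have hQup : Q θ ≤ c + M * |X| := by
        have := (abs_le.1 hQ').2; linarith
      exact med_aux_chainA ε g M η X (Q θ) c (φ (circlePt x ε θ)) (m ε) (φ x)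
        hε0 hg hη hεM hmb hθm hup hQup
    have hA1 : volume A ≤ ENNReal.ofReal (2 * Real.arccos t) :=
      (measure_mono hsubA).trans (med_aux_meas_cos_band hβ0 hβ2 ht0 ht1)
    exact absurd hπA (not_le.2 (lt_of_le_of_lt hA1 hofreal))
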